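/- Let G be a finite simple graph and k a positive integer. If G is k-choosable, then G is C-colorable for every consistent k-correspondence assignment C for G. -/

import Mathlib

/-- A `k`-correspondence assignment for a graph `G`: to each ordered pair of adjacent
vertices it assigns a partial injective function (partial equivalence) on colors
`Fin k`, such that `C_{vu}` is the inverse of `C_{uv}`. -/
structure CorrAssign {V : Type*} (G : SimpleGraph V) (k : ℕ) where
  corr : V → V → (Fin k) ≃. (Fin k)
  corr_symm : ∀ u v, G.Adj u v → corr v u = (corr u v).symm

namespace CorrAssign

variable {V : Type*} {G : SimpleGraph V} {k : ℕ}

/-- A `C`-coloring of `G`. -/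
def IsColoring (C : CorrAssign G k) (f : V → Fin k) : Prop :=
  ∀ u v, G.Adj u v → C.corr u v (f u) ≠ some (f v)

/-- `G` is `C`-colorable. -/
def Colorable (C : CorrAssign G k) : Prop := ∃ f, C.IsColoring f

/-- The composed correspondence along a walk. -/
def walkCorr (C : CorrAssign G k) : {u v : V} → G.Walk u v → (Fin k) ≃. (Fin k)
  | _, _, SimpleGraph.Walk.nil => PEquiv.refl _
  | _, _, @SimpleGraph.Walk.cons _ _ a b _ _h p => (C.corr a b).trans (C.walkCorr p)

/-- `C` is consistent on a closed walk `W`. -/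
def ConsistentOn (C : CorrAssign G k) {u : V} (W : G.Walk u u) : Prop :=
  ∀ c c' : Fin k, C.walkCorr W c = some c' → c' = c

/-- `C` is consistent. -/
def Consistent (C : CorrAssign G k) : Prop :=
  ∀ (u : V) (W : G.Walk u u), C.ConsistentOn W

end CorrAssign

/-- `G` is `k`-choosable: any assignment of lists of `k` colors admits a proper coloring
from the lists. -/
def Choosable {V : Type*} (G : SimpleGraph V) (k : ℕ) : Prop :=
  ∀ L : V → Finset ℕ, (∀ v, (L v).card = k) →
    ∃ φ : V → ℕ, (∀ v, φ v ∈ L v) ∧ ∀ u v, G.Adj u v → φ u ≠ φ v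

section Aux

variable {V : Type*} {G : SimpleGraph V} {k : ℕ}

/-- The color graph of a correspondence assignment. -/
def colorGraph (C : CorrAssign G k) : SimpleGraph (V × Fin k) where
  Adj p q := G.Adj p.1 q.1 ∧ C.corr p.1 q.1 p.2 = some q.2
  symm := by
    constructor
    rintro ⟨u, a⟩ ⟨v, b⟩ ⟨hadj, hc⟩
    dsimp only at *
    refine ⟨hadj.symm, ?_⟩
    rw [C.corr_symm u v hadj, PEquiv.eq_some_iff]
    simpa using hc
  loopless := by constructor; rintro ⟨u, a⟩ ⟨hadj, -⟩; exact hadj.ne rfl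

theorem walk_of_colorWalk (C : CorrAssign G k) :
    ∀ {p q : V × Fin k}, (colorGraph C).Walk p q →
      ∃ W : G.Walk p.1 q.1, C.walkCorr W p.2 = some q.2 := by
  intro p q w
  induction w with
  | nil => exact ⟨SimpleGraph.Walk.nil, rfl⟩
  | cons h _ ih =>
    obtain ⟨W, hW⟩ := ih
    refine ⟨SimpleGraph.Walk.cons h.1 W, ?_⟩
    show ((C.corr _ _).trans (C.walkCorr W)) _ = _
    show (C.corr _ _ _).bind (C.walkCorr W) = _
    rw [h.2]
    exact hW

end Aux

/-- If a finite simple graph `G` is `k`-choosable, then `G` is `C`-colorable for every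
consistent `k`-correspondence assignment `C`. -/


theorem colorable_of_consistent_of_choosable {V : Type*} [Fintype V]
    (G : SimpleGraph V) (k : ℕ) (hk : 0 < k)
    (h : Choosable G k) :
    ∀ C : CorrAssign G k, C.Consistent → C.Colorable := by
  intro C hcons
  classical
  obtain ⟨ι, hι⟩ := Countable.exists_injective_nat (colorGraph C).ConnectedComponent
  set σ : V → Fin k → ℕ := fun v a => ι ((colorGraph C).connectedComponentMk (v, a)) with hσ
  have hσinj : ∀ v, Function.Injective (σ v) := by
    intro v a a' hσeq
    have hcomp := hι hσeq
    rw [SimpleGraph.ConnectedComponent.eq] at hcomp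
    obtain ⟨w⟩ := hcomp
    obtain ⟨W, hW⟩ := walk_of_colorWalk C w
    exact (hcons v W a a' hW).symm
  set L : V → Finset ℕ := fun v => Finset.univ.image (σ v) with hL
  have hLcard : ∀ v, (L v).card = k := by
    intro v
    rw [hL]
    simp [Finset.card_image_of_injective _ (hσinj v)]
  obtain ⟨φ, hφmem, hφprop⟩ := h L hLcard
  have hex : ∀ v, ∃ a : Fin k, σ v a = φ v := by
    intro v
    have := hφmem v
    simp only [hL, Finset.mem_image, Finset.mem_univ, true_and] at this
    exact this
  choose f hf using hex
  refine ⟨f, fun u v hadj hcu => ?_⟩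
  have hHadj : (colorGraph C).Adj (u, f u) (v, f v) := ⟨hadj, hcu⟩
  have : σ u (f u) = σ v (f v) := by
    simp only [hσ]
    congr 1
    exact SimpleGraph.ConnectedComponent.eq.2 hHadj.reachable
  rw [hf u, hf v] at this
  exact hφprop u v hadj this
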